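/- The algebra Ĥ decomposes as the internal direct sum Ĥ = 𝔽·â₀ ⊕ H₀ ⊕ H₂ ⊕ H₋₂, and for z ∈ {0, 2, −2} the subspace H_z is exactly the z-eigenspace of the multiplication operator ad_{â₀} : x ↦ â₀·x. -/

import Mathlib

namespace HatAlgebra

/-- Basis of the algebra `Ĥ`: vectors `â i` for `i : ℤ`, `ŝ_{0̄,j}` for `j` a positive
integer, and `ŝ_{1̄,3k}`, `ŝ_{2̄,3k}` for `k` a positive integer. -/
inductive HatB : Type
  | a : ℤ → HatB
  | s0 : ℕ+ → HatB
  | s1 : ℕ+ → HatB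
  | s2 : ℕ+ → HatB
  deriving DecidableEq

variable (F : Type*) [Field F]

/-- The underlying vector space of `Ĥ`: the free `F`-vector space on `HatB`. -/
abbrev HatH : Type _ := HatB →₀ F

/-- The basis vector `â i`. -/
noncomputable def aHat (i : ℤ) : HatH F := Finsupp.single (HatB.a i) 1

/-- The element `ŝ_{r̄,j}` of `Ĥ`, with the conventions `ŝ_{r̄,0} = 0` and
`ŝ_{1̄,j} = ŝ_{0̄,j} = ŝ_{2̄,j}` whenever `3 ∤ j`. -/
noncomputable def sHat (r : ZMod 3) (j : ℕ) : HatH F :=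
  if h : j = 0 then 0
  else if h3 : 3 ∣ j then
    if r = 0 then Finsupp.single (HatB.s0 ⟨j, Nat.pos_of_ne_zero h⟩) 1
    else if r = 1 then
      Finsupp.single (HatB.s1 ⟨j / 3,
        Nat.div_pos (Nat.le_of_dvd (Nat.pos_of_ne_zero h) h3) (by norm_num)⟩) 1
    else
      Finsupp.single (HatB.s2 ⟨j / 3,
        Nat.div_pos (Nat.le_of_dvd (Nat.pos_of_ne_zero h) h3) (by norm_num)⟩) 1
  else Finsupp.single (HatB.s0 ⟨j, Nat.pos_of_ne_zero h⟩) 1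

/-- The operation `∗`: `(−1) ∗ 1̄ = −1`, `(−1) ∗ 2̄ = 1`, `0 ∗ t̄ = 0`. -/
def hatStar (x : ℤ) (t : ZMod 3) : ℤ :=
  if x = 0 then 0 else if t = 1 then -1 else if t = 2 then 1 else 0

/-- The coefficient `(δ_{ī,r̄} − 1) ∗ (ī − r̄)` appearing in rule (Ĥ2). -/
def hatC (i r : ZMod 3) : ℤ := hatStar ((if i = r then 1 else 0) - 1) (i - r)

/-- Rule (Ĥ2): the product `â_i · ŝ_{r̄,j}`. -/
noncomputable def aMulS (i : ℤ) (r : ZMod 3) (j : ℕ) : HatH F :=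
  (-2 : F) • aHat F i + (aHat F (i - (j : ℤ)) + aHat F (i + (j : ℤ))) - sHat F r j
    - (hatC (i : ZMod 3) r : F) • (sHat F (r - 1) j - sHat F (r + 1) j)

/-- `ŝ_{0̄,n} + ŝ_{1̄,n} + ŝ_{2̄,n}`. -/
noncomputable def sSum (n : ℕ) : HatH F := sHat F 0 n + sHat F 1 n + sHat F 2 n

/-- For `r ≠ t` in `ℤ/3ℤ`, the signed sum `ŝ_{r̄,n} + ŝ_{t̄,n} − ŝ_{m̄,n}` where `m̄`
is the third residue class (appearing in rules (Ĥ5), (Ĥ6), (Ĥ7)). -/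
noncomputable def sT (r t : ZMod 3) (n : ℕ) : HatH F :=
  sHat F r n + sHat F t n - sHat F (-(r + t)) n

/-- Rules (Ĥ3)–(Ĥ7): the product `ŝ_{r̄,i} · ŝ_{t̄,j}`. -/
noncomputable def sMulS (r : ZMod 3) (i : ℕ) (t : ZMod 3) (j : ℕ) : HatH F :=
  if 3 ∣ i ∧ 3 ∣ j then
    if r = t then
      (2 : F) • (sHat F r i + sHat F r j) - (sHat F r (Nat.dist i j) + sHat F r (i + j))
    else
      (2 : F) • (sT F r t i + sT F r t j) - (sT F r t (Nat.dist i j) + sT F r t (i + j))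
  else
    (2 : F) • (sHat F r i + sHat F t j) - (2 : F) • (sSum F (Nat.dist i j) + sSum F (i + j))

/-- The product of `Ĥ` on basis vectors, given by rules (Ĥ1)–(Ĥ7) (extended
symmetrically, since the product is commutative). -/
noncomputable def mulB : HatB → HatB → HatH F
  | .a i, .a j => (-2 : F) • (aHat F i + aHat F j) + sHat F (i : ZMod 3) (i - j).natAbs
  | .a i, .s0 j => aMulS F i 0 (j : ℕ)
  | .s0 j, .a i => aMulS F i 0 (j : ℕ)
  | .a i, .s1 k => aMulS F i 1 (3 * (k : ℕ))
  | .s1 k, .a i => aMulS F i 1 (3 * (k : ℕ))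
  | .a i, .s2 k => aMulS F i 2 (3 * (k : ℕ))
  | .s2 k, .a i => aMulS F i 2 (3 * (k : ℕ))
  | .s0 i, .s0 j => sMulS F 0 (i : ℕ) 0 (j : ℕ)
  | .s0 i, .s1 k => sMulS F 0 (i : ℕ) 1 (3 * (k : ℕ))
  | .s1 k, .s0 i => sMulS F 0 (i : ℕ) 1 (3 * (k : ℕ))
  | .s0 i, .s2 k => sMulS F 0 (i : ℕ) 2 (3 * (k : ℕ))
  | .s2 k, .s0 i => sMulS F 0 (i : ℕ) 2 (3 * (k : ℕ))
  | .s1 h, .s1 k => sMulS F 1 (3 * (h : ℕ)) 1 (3 * (k : ℕ))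
  | .s1 h, .s2 k => sMulS F 1 (3 * (h : ℕ)) 2 (3 * (k : ℕ))
  | .s2 k, .s1 h => sMulS F 1 (3 * (h : ℕ)) 2 (3 * (k : ℕ))
  | .s2 h, .s2 k => sMulS F 2 (3 * (h : ℕ)) 2 (3 * (k : ℕ))

/-- The commutative bilinear product of `Ĥ`, as a bilinear map. -/
noncomputable def hatMul : HatH F →ₗ[F] HatH F →ₗ[F] HatH F :=
  Finsupp.lift (HatH F →ₗ[F] HatH F) F HatB fun x => Finsupp.lift (HatH F) F HatB (mulB F x)

/-- The product of two elements of `Ĥ`. -/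
noncomputable def hmul (x y : HatH F) : HatH F := hatMul F x y


/-- `û_i := −2â₀ + (â_i + â_{−i}) + 2ŝ_{0̄,i}`. -/
noncomputable def uHat (i : ℕ) : HatH F :=
  (-2 : F) • aHat F 0 + (aHat F (i : ℤ) + aHat F (-(i : ℤ))) + (2 : F) • sHat F 0 i

/-- `v̂_i := −2â₀ + (â_i + â_{−i}) − ŝ_{0̄,i}`. -/
noncomputable def vHat (i : ℕ) : HatH F :=
  (-2 : F) • aHat F 0 + (aHat F (i : ℤ) + aHat F (-(i : ℤ))) - sHat F 0 i

/-- `ŵ_i := â_i − â_{−i}`. -/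
noncomputable def wHat (i : ℕ) : HatH F := aHat F (i : ℤ) - aHat F (-(i : ℤ))

/-- `ū_i := −2â₀ + (â_{−i} + â_i) − (ŝ_{0̄,i} + ŝ_{1̄,i} + ŝ_{2̄,i})`. -/
noncomputable def ubar (i : ℕ) : HatH F :=
  (-2 : F) • aHat F 0 + (aHat F (-(i : ℤ)) + aHat F (i : ℤ))
    - (sHat F 0 i + sHat F 1 i + sHat F 2 i)

/-- `w̄_i := ŝ_{1̄,i} − ŝ_{2̄,i}`. -/
noncomputable def wbar (i : ℕ) : HatH F := sHat F 1 i - sHat F 2 i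

/-- `H₀ := span{û_i, ū_i : i ∈ ℤ₊}`. -/
noncomputable def H0 : Submodule F (HatH F) :=
  Submodule.span F {x | ∃ i : ℕ, 0 < i ∧ (x = uHat F i ∨ x = ubar F i)}

/-- `H₂ := span{v̂_i : i ∈ ℤ₊}`. -/
noncomputable def H2 : Submodule F (HatH F) :=
  Submodule.span F {x | ∃ i : ℕ, 0 < i ∧ x = vHat F i}

/-- `H₋₂ := span{ŵ_i, w̄_i : i ∈ ℤ₊}`. -/
noncomputable def Hm2 : Submodule F (HatH F) :=
  Submodule.span F {x | ∃ i : ℕ, 0 < i ∧ (x = wHat F i ∨ x = wbar F i)}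

section Helpers
variable {F}

lemma hatMul_single_single (b c : HatB) :
    hatMul F (Finsupp.single b 1) (Finsupp.single c 1) = mulB F b c := by
  simp [hatMul, Finsupp.lift_apply, Finsupp.sum_single_index]

lemma L_single (b : HatB) :
    hatMul F (aHat F 0) (Finsupp.single b 1) = mulB F (HatB.a 0) b :=
  hatMul_single_single _ _

lemma sHat_zero (r : ZMod 3) : sHat F r 0 = 0 := by simp [sHat]

lemma sHat0_eq {j : ℕ} (h : 0 < j) :
    sHat F 0 j = Finsupp.single (HatB.s0 ⟨j, h⟩) 1 := by
  unfold sHat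
  rw [dif_neg h.ne']
  by_cases h3 : 3 ∣ j
  · rw [dif_pos h3, if_pos rfl]
  · rw [dif_neg h3]

lemma sHat_not_dvd (r : ZMod 3) {j : ℕ} (h : ¬ 3 ∣ j) :
    sHat F r j = sHat F 0 j := by
  have hj : j ≠ 0 := by rintro rfl; exact h ⟨0, rfl⟩
  unfold sHat
  rw [dif_neg hj, dif_neg h, dif_neg hj, dif_neg h]

lemma sHat1_eq {k : ℕ} (h : 0 < k) :
    sHat F 1 (3 * k) = Finsupp.single (HatB.s1 ⟨k, h⟩) 1 := by
  unfold sHat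
  rw [dif_neg (by positivity), dif_pos ⟨k, rfl⟩, if_neg (by decide), if_pos rfl]
  congr 1
  exact congrArg _ (Subtype.ext (Nat.mul_div_cancel_left k (by norm_num)))

lemma sHat2_eq {k : ℕ} (h : 0 < k) :
    sHat F 2 (3 * k) = Finsupp.single (HatB.s2 ⟨k, h⟩) 1 := by
  unfold sHat
  rw [dif_neg (by positivity), dif_pos ⟨k, rfl⟩, if_neg (by decide), if_neg (by decide)]
  congr 1
  exact congrArg _ (Subtype.ext (Nat.mul_div_cancel_left k (by norm_num)))

example : hatC 0 0 = 0 := by decide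
example : hatC 0 1 = 1 := by decide
example : hatC 0 2 = -1 := by decide

end Helpers

section EigenVectors
variable {F}

lemma L_aHat (n : ℤ) : hatMul F (aHat F 0) (aHat F n) =
    (-2 : F) • (aHat F 0 + aHat F n) + sHat F 0 n.natAbs := by
  rw [show aHat F n = Finsupp.single (HatB.a n) 1 from rfl, L_single]
  show (-2 : F) • (aHat F 0 + aHat F n) + sHat F (((0:ℤ) : ZMod 3)) ((0 - n).natAbs) = _
  rw [Int.cast_zero, zero_sub, Int.natAbs_neg]
  rfl

lemma L_s0 {j : ℕ} (h : 0 < j) :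
    hatMul F (aHat F 0) (sHat F 0 j) = vHat F j := by
  rw [sHat0_eq h, L_single]
  show aMulS F 0 0 ((⟨j, h⟩ : ℕ+) : ℕ) = _
  show aMulS F 0 0 j = _
  rw [aMulS, vHat]
  rw [show ((0:ℤ) : ZMod 3) = 0 from Int.cast_zero, show hatC 0 0 = 0 from by decide]
  rw [zero_sub, zero_add]
  push_cast
  module

lemma L_s1 {k : ℕ} (h : 0 < k) :
    hatMul F (aHat F 0) (sHat F 1 (3 * k)) =
      (-2 : F) • aHat F 0 + (aHat F (-(3 * k : ℤ)) + aHat F ((3 * k : ℤ)))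
        - sHat F 1 (3 * k) - (sHat F 0 (3 * k) - sHat F 2 (3 * k)) := by
  rw [sHat1_eq h, L_single]
  show aMulS F 0 1 (3 * ((⟨k, h⟩ : ℕ+) : ℕ)) = _
  show aMulS F 0 1 (3 * k) = _
  rw [aMulS]
  rw [show ((0:ℤ) : ZMod 3) = 0 from Int.cast_zero, show hatC 0 1 = 1 from by decide]
  rw [zero_sub, zero_add, show (1 : ZMod 3) - 1 = 0 from by decide,
    show (1 : ZMod 3) + 1 = 2 from by decide, show ((1 : ℤ) : F) = 1 from by norm_num,
    one_smul]
  simp only [sHat1_eq h]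
  push_cast
  module

lemma L_s2 {k : ℕ} (h : 0 < k) :
    hatMul F (aHat F 0) (sHat F 2 (3 * k)) =
      (-2 : F) • aHat F 0 + (aHat F (-(3 * k : ℤ)) + aHat F ((3 * k : ℤ)))
        - sHat F 2 (3 * k) + (sHat F 1 (3 * k) - sHat F 0 (3 * k)) := by
  rw [sHat2_eq h, L_single]
  show aMulS F 0 2 (3 * ((⟨k, h⟩ : ℕ+) : ℕ)) = _
  show aMulS F 0 2 (3 * k) = _
  rw [aMulS]
  rw [show ((0:ℤ) : ZMod 3) = 0 from Int.cast_zero, show hatC 0 2 = -1 from by decide]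
  rw [zero_sub, zero_add, show (2 : ZMod 3) - 1 = 1 from by decide,
    show (2 : ZMod 3) + 1 = 0 from by decide, show ((-1 : ℤ) : F) = -1 from by norm_num]
  simp only [sHat2_eq h]
  push_cast
  module

end EigenVectors

section Eigen
variable {F}

lemma L_w {i : ℕ} :
    hatMul F (aHat F 0) (wHat F i) = (-2 : F) • wHat F i := by
  simp only [wHat, map_sub, L_aHat, Int.natAbs_neg, Int.natAbs_natCast]
  module

variable [CharP F 5]

lemma five_eq_zero : (5 : F) = 0 := by
  have := CharP.cast_eq_zero F 5; norm_num at this; exact this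

lemma L_a0 : hatMul F (aHat F 0) (aHat F 0) = (1 : F) • aHat F 0 := by
  have h5 : (5 : F) = 0 := five_eq_zero
  rw [L_aHat 0]
  simp only [Int.natAbs_zero, sHat_zero, add_zero]
  match_scalars
  linear_combination -h5

omit [CharP F 5] in
lemma L_u {i : ℕ} (hi : 0 < i) :
    hatMul F (aHat F 0) (uHat F i) = 0 := by
  simp only [uHat, map_add, map_smul, L_aHat, L_s0 hi, Int.natAbs_neg,
    Int.natAbs_natCast, Int.natAbs_zero, sHat_zero, add_zero, vHat]
  module

lemma L_v {i : ℕ} (hi : 0 < i) :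
    hatMul F (aHat F 0) (vHat F i) = (2 : F) • vHat F i := by
  have h5 : (5 : F) = 0 := five_eq_zero
  simp only [vHat, map_add, map_sub, map_smul, L_aHat, L_s0 hi, Int.natAbs_neg,
    Int.natAbs_natCast, Int.natAbs_zero, sHat_zero, add_zero]
  match_scalars <;> (first | ring1 | linear_combination h5 | linear_combination -h5 | linear_combination 2*h5 | linear_combination -2*h5 | linear_combination 3*h5 | linear_combination -3*h5 | linear_combination 4*h5 | linear_combination -4*h5)

lemma L_ubar {i : ℕ} (hi : 0 < i) :
    hatMul F (aHat F 0) (ubar F i) = 0 := by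
  have h5 : (5 : F) = 0 := five_eq_zero
  by_cases h3 : 3 ∣ i
  · obtain ⟨k, rfl⟩ := h3
    have hk : 0 < k := by omega
    simp only [ubar, map_add, map_sub, map_smul, L_aHat, L_s0 (by positivity : 0 < 3 * k),
      L_s1 hk, L_s2 hk, Int.natAbs_neg, Int.natAbs_natCast, Int.natAbs_zero, sHat_zero,
      add_zero, vHat]
    push_cast
    match_scalars <;> (first | ring1 | linear_combination h5 | linear_combination -h5 | linear_combination 2*h5 | linear_combination -2*h5 | linear_combination 3*h5 | linear_combination -3*h5 | linear_combination 4*h5 | linear_combination -4*h5)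
  · simp only [ubar, sHat_not_dvd 1 h3, sHat_not_dvd 2 h3, map_add, map_sub, map_smul,
      L_aHat, L_s0 hi, Int.natAbs_neg, Int.natAbs_natCast, Int.natAbs_zero, sHat_zero,
      add_zero, vHat]
    match_scalars <;> (first | ring1 | linear_combination h5 | linear_combination -h5 | linear_combination 2*h5 | linear_combination -2*h5 | linear_combination 3*h5 | linear_combination -3*h5 | linear_combination 4*h5 | linear_combination -4*h5)

omit [CharP F 5] in
lemma L_wbar {i : ℕ} (hi : 0 < i) :
    hatMul F (aHat F 0) (wbar F i) = (-2 : F) • wbar F i := by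
  by_cases h3 : 3 ∣ i
  · obtain ⟨k, rfl⟩ := h3
    have hk : 0 < k := by omega
    simp only [wbar, map_sub, L_s1 hk, L_s2 hk]
    module
  · simp only [wbar, sHat_not_dvd 1 h3, sHat_not_dvd 2 h3, sub_self, map_zero, smul_zero]

end Eigen

section Decomp
set_option linter.unreachableTactic false
set_option linter.unusedTactic false
variable {F} [CharP F 5]

lemma dec_a_pos {i : ℕ} (hi : 0 < i) :
    Finsupp.single (HatB.a (i : ℤ)) (1 : F) =
      aHat F 0 + uHat F i + (2 : F) • vHat F i + (3 : F) • wHat F i := by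
  have h5 : (5 : F) = 0 := five_eq_zero
  simp only [uHat, vHat, wHat]
  rw [show Finsupp.single (HatB.a (i : ℤ)) (1 : F) = aHat F (i : ℤ) from rfl]
  match_scalars <;> (first | ring1 | linear_combination h5 | linear_combination -h5 | linear_combination 2*h5 | linear_combination -2*h5 | linear_combination 3*h5 | linear_combination -3*h5)

lemma dec_a_neg {i : ℕ} (hi : 0 < i) :
    Finsupp.single (HatB.a (-(i : ℤ))) (1 : F) =
      aHat F 0 + uHat F i + (2 : F) • vHat F i + (2 : F) • wHat F i := by
  have h5 : (5 : F) = 0 := five_eq_zero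
  simp only [uHat, vHat, wHat]
  rw [show Finsupp.single (HatB.a (-(i : ℤ))) (1 : F) = aHat F (-(i : ℤ)) from rfl]
  match_scalars <;> (first | ring1 | linear_combination h5 | linear_combination -h5 | linear_combination 2*h5 | linear_combination -2*h5 | linear_combination 3*h5 | linear_combination -3*h5)

lemma dec_s0 {j : ℕ} (hj : 0 < j) :
    Finsupp.single (HatB.s0 ⟨j, hj⟩) (1 : F) = (2 : F) • uHat F j + (3 : F) • vHat F j := by
  have h5 : (5 : F) = 0 := five_eq_zero
  simp only [uHat, vHat, sHat0_eq hj]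
  match_scalars <;> (first | ring1 | linear_combination h5 | linear_combination -h5 | linear_combination 2*h5 | linear_combination -2*h5 | linear_combination 3*h5 | linear_combination -3*h5)

lemma dec_s1 {k : ℕ} (hk : 0 < k) :
    Finsupp.single (HatB.s1 ⟨k, hk⟩) (1 : F) =
      (3 : F) • vHat F (3 * k) + (2 : F) • ubar F (3 * k) + (3 : F) • wbar F (3 * k) := by
  have h5 : (5 : F) = 0 := five_eq_zero
  simp only [uHat, vHat, ubar, wbar, sHat0_eq (by omega : 0 < 3 * k), sHat1_eq hk,
    sHat2_eq hk]
  match_scalars <;> (first | ring1 | linear_combination h5 | linear_combination -h5 | linear_combination 2*h5 | linear_combination -2*h5 | linear_combination 3*h5 | linear_combination -3*h5)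

lemma dec_s2 {k : ℕ} (hk : 0 < k) :
    Finsupp.single (HatB.s2 ⟨k, hk⟩) (1 : F) =
      (3 : F) • vHat F (3 * k) + (2 : F) • ubar F (3 * k) + (2 : F) • wbar F (3 * k) := by
  have h5 : (5 : F) = 0 := five_eq_zero
  simp only [uHat, vHat, ubar, wbar, sHat0_eq (by omega : 0 < 3 * k), sHat1_eq hk,
    sHat2_eq hk]
  match_scalars <;> (first | ring1 | linear_combination h5 | linear_combination -h5 | linear_combination 2*h5 | linear_combination -2*h5 | linear_combination 3*h5 | linear_combination -3*h5)

lemma single_mem (b : HatB) : Finsupp.single b (1 : F) ∈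
    Submodule.span F {aHat F 0} ⊔ H0 F ⊔ H2 F ⊔ Hm2 F := by
  set M := Submodule.span F {aHat F 0} ⊔ H0 F ⊔ H2 F ⊔ Hm2 F with hM
  have hS0 : Submodule.span F {aHat F 0} ≤ M := le_sup_left.trans (le_sup_left.trans le_sup_left)
  have hH0 : H0 F ≤ M := le_sup_right.trans (le_sup_left.trans le_sup_left)
  have hH2 : H2 F ≤ M := le_sup_right.trans le_sup_left
  have hHm2 : Hm2 F ≤ M := le_sup_right
  have ha0 : aHat F 0 ∈ M := hS0 (Submodule.mem_span_singleton_self _)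
  have hu : ∀ {i : ℕ}, 0 < i → uHat F i ∈ M := fun hi =>
    hH0 (Submodule.subset_span ⟨_, hi, Or.inl rfl⟩)
  have hub : ∀ {i : ℕ}, 0 < i → ubar F i ∈ M := fun hi =>
    hH0 (Submodule.subset_span ⟨_, hi, Or.inr rfl⟩)
  have hv : ∀ {i : ℕ}, 0 < i → vHat F i ∈ M := fun hi =>
    hH2 (Submodule.subset_span ⟨_, hi, rfl⟩)
  have hw : ∀ {i : ℕ}, 0 < i → wHat F i ∈ M := fun hi =>
    hHm2 (Submodule.subset_span ⟨_, hi, Or.inl rfl⟩)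
  have hwb : ∀ {i : ℕ}, 0 < i → wbar F i ∈ M := fun hi =>
    hHm2 (Submodule.subset_span ⟨_, hi, Or.inr rfl⟩)
  cases b with
  | a i =>
    rcases i with (n | n)
    · cases n with
      | zero => exact ha0
      | succ m =>
        rw [show Int.ofNat (m + 1) = ((m + 1 : ℕ) : ℤ) from rfl,
          dec_a_pos (Nat.succ_pos m)]
        exact add_mem (add_mem (add_mem ha0 (hu (Nat.succ_pos m)))
          (Submodule.smul_mem _ _ (hv (Nat.succ_pos m))))
          (Submodule.smul_mem _ _ (hw (Nat.succ_pos m)))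
    · rw [show Int.negSucc n = -((n + 1 : ℕ) : ℤ) from rfl, dec_a_neg (Nat.succ_pos n)]
      exact add_mem (add_mem (add_mem ha0 (hu (Nat.succ_pos n)))
        (Submodule.smul_mem _ _ (hv (Nat.succ_pos n))))
        (Submodule.smul_mem _ _ (hw (Nat.succ_pos n)))
  | s0 j =>
    obtain ⟨j, hj⟩ := j
    rw [dec_s0 hj]
    exact add_mem (Submodule.smul_mem _ _ (hu hj)) (Submodule.smul_mem _ _ (hv hj))
  | s1 k =>
    obtain ⟨k, hk⟩ := k
    rw [dec_s1 hk]
    exact add_mem (add_mem (Submodule.smul_mem _ _ (hv (by omega)))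
      (Submodule.smul_mem _ _ (hub (by omega)))) (Submodule.smul_mem _ _ (hwb (by omega)))
  | s2 k =>
    obtain ⟨k, hk⟩ := k
    rw [dec_s2 hk]
    exact add_mem (add_mem (Submodule.smul_mem _ _ (hv (by omega)))
      (Submodule.smul_mem _ _ (hub (by omega)))) (Submodule.smul_mem _ _ (hwb (by omega)))

lemma sup_eq_top :
    Submodule.span F {aHat F 0} ⊔ H0 F ⊔ H2 F ⊔ Hm2 F = ⊤ := by
  rw [eq_top_iff]
  rintro x -
  induction x using Finsupp.induction_linear with
  | zero => exact zero_mem _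
  | add f g hf hg => exact add_mem hf hg
  | single b m =>
    rw [show Finsupp.single b m = m • Finsupp.single b (1 : F) by
      rw [Finsupp.smul_single, smul_eq_mul, mul_one]]
    exact Submodule.smul_mem _ _ (single_mem b)

end Decomp

section Main
variable {F}

lemma eigenspace_le_of {V : Type*} [AddCommGroup V] [Module F V] (L : Module.End F V)
    (A B C D : Submodule F V) (α β γ δ : F)
    (hA : A ≤ L.eigenspace α) (hB : B ≤ L.eigenspace β)
    (hC : C ≤ L.eigenspace γ) (hD : D ≤ L.eigenspace δ)
    (hα : α ≠ β) (hγ : γ ≠ β) (hδ : δ ≠ β)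
    (htop : ∀ x : V, ∃ a ∈ A, ∃ b ∈ B, ∃ c ∈ C, ∃ d ∈ D, x = a + b + c + d) :
    L.eigenspace β ≤ B := by
  intro x hx
  obtain ⟨a, ha, b, hb, c, hc, d, hd, hxe⟩ := htop x
  have hmem : a + c + d ∈ L.eigenspace β ⊓ ⨆ μ ∈ ({α, γ, δ} : Set F), L.eigenspace μ := by
    refine Submodule.mem_inf.mpr ⟨?_, ?_⟩
    · have h1 := Submodule.sub_mem _ hx (hB hb)
      have heq : x - b = a + c + d := by rw [hxe]; abel
      rwa [heq] at h1
    · refine add_mem (add_mem ?_ ?_) ?_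
      · exact Submodule.mem_iSup_of_mem α (Submodule.mem_iSup_of_mem (by simp) (hA ha))
      · exact Submodule.mem_iSup_of_mem γ (Submodule.mem_iSup_of_mem (by simp) (hC hc))
      · exact Submodule.mem_iSup_of_mem δ (Submodule.mem_iSup_of_mem (by simp) (hD hd))
  have hdisj : Disjoint (L.eigenspace β) (⨆ μ ∈ ({α, γ, δ} : Set F), L.eigenspace μ) :=
    (Module.End.eigenspaces_iSupIndep L).disjoint_biSup (by
      simp only [Set.mem_insert_iff, Set.mem_singleton_iff, not_or]
      exact ⟨hα.symm, hγ.symm, hδ.symm⟩)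
  have h0 : a + c + d = 0 := by
    have := (Submodule.disjoint_def.mp hdisj) _ (Submodule.mem_inf.mp hmem).1
      (Submodule.mem_inf.mp hmem).2
    exact this
  have hxb : x = b := by rw [hxe, show a + b + c + d = b + (a + c + d) by abel, h0, add_zero]
  exact hxb ▸ hb

variable [CharP F 5]

lemma span_le_eigen1 :
    Submodule.span F {aHat F 0} ≤ Module.End.eigenspace (hatMul F (aHat F 0)) 1 := by
  rw [Submodule.span_le, Set.singleton_subset_iff, SetLike.mem_coe,
    Module.End.mem_eigenspace_iff]
  exact L_a0

lemma H0_le_eigen : H0 F ≤ Module.End.eigenspace (hatMul F (aHat F 0)) 0 := by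
  rw [H0, Submodule.span_le]
  rintro x ⟨i, hi, rfl | rfl⟩ <;> rw [SetLike.mem_coe, Module.End.mem_eigenspace_iff, zero_smul]
  · exact L_u hi
  · exact L_ubar hi

lemma H2_le_eigen : H2 F ≤ Module.End.eigenspace (hatMul F (aHat F 0)) 2 := by
  rw [H2, Submodule.span_le]
  rintro x ⟨i, hi, rfl⟩
  rw [SetLike.mem_coe, Module.End.mem_eigenspace_iff]
  exact L_v hi

omit [CharP F 5] in
lemma Hm2_le_eigen : Hm2 F ≤ Module.End.eigenspace (hatMul F (aHat F 0)) (-2) := by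
  rw [Hm2, Submodule.span_le]
  rintro x ⟨i, hi, rfl | rfl⟩ <;> rw [SetLike.mem_coe, Module.End.mem_eigenspace_iff]
  · exact L_w
  · exact L_wbar hi

lemma ne_facts : (1 : F) ≠ 0 ∧ (2 : F) ≠ 0 ∧ (3 : F) ≠ 0 ∧ (4 : F) ≠ 0 := by
  refine ⟨one_ne_zero, ?_, ?_, ?_⟩
  · rw [show (2 : F) = ((2 : ℕ) : F) by norm_num, Ne, CharP.cast_eq_zero_iff F 5]; norm_num
  · rw [show (3 : F) = ((3 : ℕ) : F) by norm_num, Ne, CharP.cast_eq_zero_iff F 5]; norm_num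
  · rw [show (4 : F) = ((4 : ℕ) : F) by norm_num, Ne, CharP.cast_eq_zero_iff F 5]; norm_num

lemma mu_inj : Function.Injective (![1, 0, 2, -2] : Fin 4 → F) := by
  have h1 : (1:F) ≠ 0 := one_ne_zero
  have h2 : (2:F) ≠ 0 := by
    rw [show (2 : F) = ((2 : ℕ) : F) by norm_num, Ne, CharP.cast_eq_zero_iff F 5]; norm_num
  have h3 : (3:F) ≠ 0 := by
    rw [show (3 : F) = ((3 : ℕ) : F) by norm_num, Ne, CharP.cast_eq_zero_iff F 5]; norm_num
  have h4 : (4:F) ≠ 0 := by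
    rw [show (4 : F) = ((4 : ℕ) : F) by norm_num, Ne, CharP.cast_eq_zero_iff F 5]; norm_num
  have h12 : (1 : F) ≠ 2 := sub_ne_zero.mp (by
    rw [show (1 : F) - 2 = -1 by ring]; exact neg_ne_zero.mpr h1)
  have h1m2 : (1 : F) ≠ -2 := sub_ne_zero.mp (by
    rw [show (1 : F) - -2 = 3 by ring]; exact h3)
  have h2m2 : (2 : F) ≠ -2 := sub_ne_zero.mp (by
    rw [show (2 : F) - -2 = 4 by ring]; exact h4)
  have hm2 : (-2 : F) ≠ 0 := neg_ne_zero.mpr h2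
  intro a b hab
  fin_cases a <;> fin_cases b <;> simp at hab ⊢ <;>
    first
      | exact absurd hab h1
      | exact absurd hab h2
      | exact absurd hab h12
      | exact absurd hab h1m2
      | exact absurd hab h2m2
      | exact absurd hab.symm h1
      | exact absurd hab.symm h2
      | exact absurd hab.symm hm2
      | exact absurd hab.symm h12
      | exact absurd hab.symm h1m2
      | exact absurd hab.symm h2m2
      | exact absurd hab (fun hh => hm2 hh.symm)
      | exact absurd hab (fun hh => h2 (by linear_combination hh))
      | exact absurd hab (fun hh => h4 (by linear_combination hh))
      | exact absurd hab (fun hh => h4 (by linear_combination -hh))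

end Main


/-- `Ĥ = 𝔽·â₀ ⊕ H₀ ⊕ H₂ ⊕ H₋₂` as an internal direct sum, and for
`z ∈ {0, 2, −2}` the subspace `H_z` is the `z`-eigenspace of `ad_{â₀}`. -/
theorem eigenspace_decomposition [CharP F 5] :
    DirectSum.IsInternal
      (fun z : Fin 4 => ![Submodule.span F {aHat F 0}, H0 F, H2 F, Hm2 F] z) ∧
      H0 F = Module.End.eigenspace (hatMul F (aHat F 0)) 0 ∧
      H2 F = Module.End.eigenspace (hatMul F (aHat F 0)) 2 ∧
      Hm2 F = Module.End.eigenspace (hatMul F (aHat F 0)) (-2) := by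
  classical
  obtain ⟨h1, h2, h3, h4⟩ := ne_facts (F := F)
  set L := hatMul F (aHat F 0) with hL
  have hdec : ∀ x : HatH F, ∃ a ∈ Submodule.span F {aHat F 0}, ∃ b ∈ H0 F, ∃ c ∈ H2 F,
      ∃ d ∈ Hm2 F, x = a + b + c + d := by
    intro x
    have hx : x ∈ Submodule.span F {aHat F 0} ⊔ H0 F ⊔ H2 F ⊔ Hm2 F := by
      rw [sup_eq_top]; exact Submodule.mem_top
    obtain ⟨y, hy, d, hd, rfl⟩ := Submodule.mem_sup.mp hx
    obtain ⟨z, hz, c, hc, rfl⟩ := Submodule.mem_sup.mp hy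
    obtain ⟨a, ha, b, hb, rfl⟩ := Submodule.mem_sup.mp hz
    exact ⟨a, ha, b, hb, c, hc, d, hd, rfl⟩
  have h10 : (1 : F) ≠ 0 := h1
  have h20 : (2 : F) ≠ 0 := h2
  have hm20 : (-2 : F) ≠ 0 := neg_ne_zero.mpr h2
  have h12 : (1 : F) ≠ 2 := sub_ne_zero.mp (by
    rw [show (1 : F) - 2 = -1 by ring]; exact neg_ne_zero.mpr h1)
  have h02 : (0 : F) ≠ 2 := fun h => h2 h.symm
  have hm22 : (-2 : F) ≠ 2 := sub_ne_zero.mp (by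
    rw [show (-2 : F) - 2 = -4 by ring]; exact neg_ne_zero.mpr h4)
  have h1m2 : (1 : F) ≠ -2 := sub_ne_zero.mp (by
    rw [show (1 : F) - -2 = 3 by ring]; exact h3)
  have h0m2 : (0 : F) ≠ -2 := fun h => hm20 h.symm
  have h2m2 : (2 : F) ≠ -2 := fun h => hm22 h.symm
  have hH0eq : H0 F = Module.End.eigenspace L 0 :=
    le_antisymm H0_le_eigen
      (eigenspace_le_of L _ _ _ _ 1 0 2 (-2) span_le_eigen1 H0_le_eigen H2_le_eigen
        Hm2_le_eigen h10 h20 hm20 hdec)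
  have hH2eq : H2 F = Module.End.eigenspace L 2 :=
    le_antisymm H2_le_eigen
      (eigenspace_le_of L _ _ _ _ 1 2 0 (-2) span_le_eigen1 H2_le_eigen H0_le_eigen
        Hm2_le_eigen h12 (fun h => h02 h) hm22 (fun x => by
          obtain ⟨a, ha, b, hb, c, hc, d, hd, he⟩ := hdec x
          exact ⟨a, ha, c, hc, b, hb, d, hd, by rw [he]; abel⟩))
  have hHm2eq : Hm2 F = Module.End.eigenspace L (-2) :=
    le_antisymm Hm2_le_eigen
      (eigenspace_le_of L _ _ _ _ 1 (-2) 0 2 span_le_eigen1 Hm2_le_eigen H0_le_eigen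
        H2_le_eigen h1m2 h0m2 h2m2 (fun x => by
          obtain ⟨a, ha, b, hb, c, hc, d, hd, he⟩ := hdec x
          exact ⟨a, ha, d, hd, b, hb, c, hc, by rw [he]; abel⟩))
  refine ⟨?_, hH0eq, hH2eq, hHm2eq⟩
  rw [DirectSum.isInternal_submodule_iff_iSupIndep_and_iSup_eq_top]
  constructor
  · refine iSupIndep.mono ((Module.End.eigenspaces_iSupIndep L).comp mu_inj) ?_
    intro z
    fin_cases z <;> simp only [Function.comp_apply, Matrix.cons_val_zero,
      Matrix.cons_val_one, Matrix.head_cons, Matrix.cons_val_two, Matrix.tail_cons,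
      Matrix.cons_val_three, Fin.mk_one, Fin.mk_zero, Fin.isValue]
    · exact span_le_eigen1
    · exact H0_le_eigen
    · exact H2_le_eigen
    · exact Hm2_le_eigen
  · apply top_unique
    rw [← sup_eq_top (F := F)]
    refine sup_le (sup_le (sup_le ?_ ?_) ?_) ?_
    · simpa using le_iSup (fun z : Fin 4 => ![Submodule.span F {aHat F 0}, H0 F, H2 F, Hm2 F] z)
        (0 : Fin 4)
    · simpa using le_iSup (fun z : Fin 4 => ![Submodule.span F {aHat F 0}, H0 F, H2 F, Hm2 F] z)
        (1 : Fin 4)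
    · simpa using le_iSup (fun z : Fin 4 => ![Submodule.span F {aHat F 0}, H0 F, H2 F, Hm2 F] z)
        (2 : Fin 4)
    · simpa using le_iSup (fun z : Fin 4 => ![Submodule.span F {aHat F 0}, H0 F, H2 F, Hm2 F] z)
        (3 : Fin 4)


end HatAlgebra
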